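/- Let H be a real symmetric invertible d×d matrix with exactly one negative eigenvalue, and let v be a unit vector with v·H⁻¹v = -1/μ for some μ > 0. Then the matrix H + 2μ v⊗v is symmetric positive definite and det(H + 2μ v⊗v) = -det H. -/

import Mathlib

open Matrix

theorem stmt_11 (d : ℕ) (H : Matrix (Fin d) (Fin d) ℝ)
    (hH : H.IsHermitian) (hHinv : IsUnit H.det)
    (hHneg : (Finset.univ.filter (fun i => hH.eigenvalues i < 0)).card = 1)
    (μ : ℝ) (hμ : 0 < μ)
    (v : Fin d → ℝ) (hv : v ⬝ᵥ v = 1)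
    (hvH : v ⬝ᵥ H⁻¹.mulVec v = -1 / μ) :
    (H + (2 * μ) • vecMulVec v v).PosDef ∧
    (H + (2 * μ) • vecMulVec v v).det = -H.det := by
  classical
  set L := hH.eigenvalues with hL
  -- determinant and eigenvalue facts
  have hdet_ne : H.det ≠ 0 := hHinv.ne_zero
  have hdet : H.det = ∏ i, L i := by
    simpa using hH.det_eq_prod_eigenvalues
  have hLne : ∀ i, L i ≠ 0 := by
    intro i hi
    exact hdet_ne (by rw [hdet]; exact Finset.prod_eq_zero (Finset.mem_univ i) hi)
  obtain ⟨i₀, hi₀⟩ := Finset.card_eq_one.mp hHneg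
  have hi₀neg : L i₀ < 0 := by
    have : i₀ ∈ Finset.univ.filter (fun i => hH.eigenvalues i < 0) := by
      rw [hi₀]; exact Finset.mem_singleton_self i₀
    exact (Finset.mem_filter.mp this).2
  have hLpos : ∀ j, j ≠ i₀ → 0 < L j := by
    intro j hj
    rcases lt_trichotomy (L j) 0 with h | h | h
    · exfalso
      have : j ∈ Finset.univ.filter (fun i => hH.eigenvalues i < 0) :=
        Finset.mem_filter.mpr ⟨Finset.mem_univ j, h⟩
      rw [hi₀, Finset.mem_singleton] at this
      exact hj this
    · exact absurd h (hLne j)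
    · exact h
  -- spectral decomposition
  set U : Matrix (Fin d) (Fin d) ℝ := ↑(hH.eigenvectorUnitary) with hUdef
  have hU1 : U * star U = 1 := (Matrix.mem_unitaryGroup_iff).mp (hH.eigenvectorUnitary).2
  have hU2 : star U * U = 1 := (Matrix.mem_unitaryGroup_iff').mp (hH.eigenvectorUnitary).2
  have hspec : H = U * Matrix.diagonal L * star U := by
    simpa using hH.spectral_theorem
  set c : (Fin d → ℝ) → (Fin d → ℝ) := fun z => star U *ᵥ z with hc
  have hHt : Hᵀ = H := by rw [← conjTranspose_eq_transpose_of_trivial]; exact hH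
  have hUt : Uᵀ = star U := by
    rw [star_eq_conjTranspose, conjTranspose_eq_transpose_of_trivial]
  have hcinj : ∀ z, c z = 0 → z = 0 := by
    intro z hz
    calc z = (U * star U) *ᵥ z := by rw [hU1, one_mulVec]
    _ = U *ᵥ (star U *ᵥ z) := by rw [mulVec_mulVec]
    _ = U *ᵥ 0 := by rw [show star U *ᵥ z = 0 from hz]
    _ = 0 := mulVec_zero U
  have hsymm : ∀ a b : Fin d → ℝ, a ⬝ᵥ H *ᵥ b = b ⬝ᵥ H *ᵥ a := by
    intro a b
    rw [dotProduct_mulVec, ← mulVec_transpose, hHt, dotProduct_comm]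
  have hq : ∀ z : Fin d → ℝ, z ⬝ᵥ H *ᵥ z = ∑ i, L i * (c z i) ^ 2 := by
    intro z
    conv_lhs => rw [hspec]
    rw [← mulVec_mulVec, ← mulVec_mulVec, dotProduct_mulVec, ← mulVec_transpose, hUt]
    show (c z) ⬝ᵥ (Matrix.diagonal L *ᵥ (c z)) = _
    rw [dotProduct]
    refine Finset.sum_congr rfl fun i _ => ?_
    rw [mulVec_diagonal]
    ring
  have hq_pos : ∀ z : Fin d → ℝ, z ≠ 0 → c z i₀ = 0 → 0 < z ⬝ᵥ H *ᵥ z := by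
    intro z hz hcz
    rw [hq]
    have hczne : c z ≠ 0 := fun h => hz (hcinj z h)
    obtain ⟨j, hj⟩ := Function.ne_iff.mp hczne
    have hji : j ≠ i₀ := by rintro rfl; exact hj hcz
    refine Finset.sum_pos' (fun i _ => ?_) ⟨j, Finset.mem_univ j, ?_⟩
    · rcases eq_or_ne i i₀ with rfl | hi
      · rw [hcz]; simp
      · exact mul_nonneg (hLpos i hi).le (sq_nonneg _)
    · exact mul_pos (hLpos j hji) (lt_of_le_of_ne (sq_nonneg _) (Ne.symm (pow_ne_zero 2 hj)))
  -- the special vector w = H⁻¹ v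
  set w : Fin d → ℝ := H⁻¹ *ᵥ v with hwdef
  have hHw : H *ᵥ w = v := by
    rw [hwdef, mulVec_mulVec, mul_nonsing_inv H hHinv, one_mulVec]
  have hvw : v ⬝ᵥ w = -1 / μ := hvH
  have hvw_ne : v ⬝ᵥ w ≠ 0 := by
    rw [hvw]
    have : -1 / μ < 0 := div_neg_of_neg_of_pos (by norm_num) hμ
    exact ne_of_lt this
  have hw_ne : w ≠ 0 := by
    intro h; rw [h, dotProduct_zero] at hvw_ne; exact hvw_ne rfl
  have hqw : w ⬝ᵥ H *ᵥ w = -1 / μ := by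
    rw [hHw, dotProduct_comm]; exact hvw
  have hcross : ∀ y : Fin d → ℝ, w ⬝ᵥ H *ᵥ y = v ⬝ᵥ y := by
    intro y; rw [dotProduct_mulVec, ← mulVec_transpose, hHt, hHw]
  -- positivity on the hyperplane v ⬝ᵥ x = 0
  have hplane : ∀ x : Fin d → ℝ, x ≠ 0 → v ⬝ᵥ x = 0 → 0 < x ⬝ᵥ H *ᵥ x := by
    intro x hx hvx
    by_contra hle
    push_neg at hle
    by_cases hcw : c w i₀ = 0
    · have h1 := hq_pos w hw_ne hcw
      rw [hqw] at h1
      have h2 : -1 / μ < 0 := div_neg_of_neg_of_pos (by norm_num) hμ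
      linarith
    · set z : Fin d → ℝ := c x i₀ • w - c w i₀ • x with hzdef
      have hcz : c z i₀ = 0 := by
        simp only [hzdef, hc, mulVec_sub, mulVec_smul, Pi.sub_apply, Pi.smul_apply, smul_eq_mul]
        ring
      have hz : z ≠ 0 := by
        intro h0
        have h1 : c x i₀ • w = c w i₀ • x := by
          have := sub_eq_zero.mp (hzdef ▸ h0)
          exact this
        have h2 : c x i₀ * (v ⬝ᵥ w) = c w i₀ * (v ⬝ᵥ x) := by
          have h2' := congrArg (fun u => v ⬝ᵥ u) h1
          simpa [dotProduct_smul, smul_eq_mul] using h2'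
        rw [hvx, mul_zero] at h2
        have h3 : c x i₀ = 0 := by
          rcases mul_eq_zero.mp h2 with h | h
          · exact h
          · exact absurd h hvw_ne
        rw [h3, zero_smul] at h1
        have h4 : x = 0 := by
          have := h1.symm
          rcases smul_eq_zero.mp this with h | h
          · exact absurd h hcw
          · exact h
        exact hx h4
      have hpos := hq_pos z hz hcz
      have hexp : z ⬝ᵥ H *ᵥ z =
          c x i₀ ^ 2 * (w ⬝ᵥ H *ᵥ w) - 2 * c x i₀ * c w i₀ * (w ⬝ᵥ H *ᵥ x)
            + c w i₀ ^ 2 * (x ⬝ᵥ H *ᵥ x) := by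
        have hsx : x ⬝ᵥ H *ᵥ w = w ⬝ᵥ H *ᵥ x := hsymm x w
        simp only [hzdef, sub_dotProduct, smul_dotProduct, mulVec_sub, mulVec_smul,
          dotProduct_sub, dotProduct_smul, smul_eq_mul, hsx]
        ring
      rw [hexp, hqw, hcross x, hvx] at hpos
      have hneg : -1 / μ < 0 := div_neg_of_neg_of_pos (by norm_num) hμ
      have t1 : c x i₀ ^ 2 * (-1 / μ) ≤ 0 :=
        mul_nonpos_of_nonneg_of_nonpos (sq_nonneg _) hneg.le
      have t2 : c w i₀ ^ 2 * (x ⬝ᵥ H *ᵥ x) ≤ 0 :=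
        mul_nonpos_of_nonneg_of_nonpos (sq_nonneg _) hle
      linarith
  -- quadratic form of the perturbed matrix
  have hquad : ∀ x : Fin d → ℝ,
      x ⬝ᵥ (H + (2 * μ) • vecMulVec v v) *ᵥ x
        = x ⬝ᵥ H *ᵥ x + 2 * μ * (v ⬝ᵥ x) ^ 2 := by
    intro x
    have hvvx : vecMulVec v v *ᵥ x = (v ⬝ᵥ x) • v := by
      ext i
      simp only [mulVec, vecMulVec_apply, dotProduct, Pi.smul_apply, smul_eq_mul,
        Finset.sum_mul]
      exact Finset.sum_congr rfl fun j _ => by ring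
    rw [add_mulVec, dotProduct_add, smul_mulVec, dotProduct_smul, hvvx,
      dotProduct_smul, dotProduct_comm x v, smul_eq_mul, smul_eq_mul]
    ring
  have hherm : (H + (2 * μ) • vecMulVec v v).IsHermitian := by
    refine hH.add ?_
    show _ᴴ = _
    ext i j
    simp only [conjTranspose_apply, Matrix.smul_apply, vecMulVec_apply, star_trivial,
      smul_eq_mul]
    ring
  constructor
  · refine PosDef.of_dotProduct_mulVec_pos hherm ?_
    intro x hx
    have hstar : star x = x := by simp
    rw [hstar, hquad x]
    set t : ℝ := -μ * (v ⬝ᵥ x) with htdef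
    set y : Fin d → ℝ := x - t • w with hydef
    have hxy : x = y + t • w := by rw [hydef]; abel
    have hvy : v ⬝ᵥ y = 0 := by
      rw [hydef, dotProduct_sub, dotProduct_smul, hvw, smul_eq_mul, htdef]
      field_simp
      ring
    have hwy : w ⬝ᵥ H *ᵥ y = 0 := by rw [hcross, hvy]
    have hxexp : x ⬝ᵥ H *ᵥ x = y ⬝ᵥ H *ᵥ y + 2 * t * (w ⬝ᵥ H *ᵥ y) + t ^ 2 * (w ⬝ᵥ H *ᵥ w) := by
      have hsy : y ⬝ᵥ H *ᵥ w = w ⬝ᵥ H *ᵥ y := hsymm y w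
      conv_lhs => rw [hxy]
      simp only [add_dotProduct, smul_dotProduct, mulVec_add, mulVec_smul,
        dotProduct_add, dotProduct_smul, smul_eq_mul, hsy]
      ring
    have hvx : v ⬝ᵥ x = -t / μ := by rw [htdef]; field_simp
    rw [hxexp, hwy, hqw, hvx]
    have hfin : y ⬝ᵥ H *ᵥ y + 2 * t * 0 + t ^ 2 * (-1 / μ) + 2 * μ * (-t / μ) ^ 2
        = y ⬝ᵥ H *ᵥ y + t ^ 2 / μ := by field_simp; ring
    rw [hfin]
    by_cases hy0 : y = 0
    · have ht0 : t ≠ 0 := by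
        intro h
        rw [hxy, hy0, h, zero_smul, add_zero] at hx
        exact hx rfl
      rw [hy0]
      simp only [zero_dotProduct, zero_add]
      positivity
    · have h1 := hplane y hy0 hvy
      have h2 : 0 ≤ t ^ 2 / μ := by positivity
      linarith
  · -- determinant
    have hvv : (2 * μ) • vecMulVec v v = replicateCol (Fin 1) ((2 * μ) • v) * replicateRow (Fin 1) v := by
      erw [← vecMulVec_eq (Fin 1)]
      ext i j
      simp [vecMulVec_apply]
      ring
    have hent : v ⬝ᵥ H⁻¹ *ᵥ ((2 * μ) • v) = -2 := by
      rw [mulVec_smul, ← hwdef, dotProduct_smul, hvw, smul_eq_mul]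
      field_simp
    rw [hvv]
    erw [det_add_replicateCol_mul_replicateRow hHinv]
    simp only [Matrix.mul_assoc, ← replicateCol_mulVec]
    have hX : ((replicateRow (Fin 1) v * H⁻¹) *ᵥ ((2 * μ) • v)) 0 = -2 := by
      rw [← replicateRow_vecMul, replicateRow_mulVec_eq_const]
      show (v ᵥ* H⁻¹) ⬝ᵥ ((2 * μ) • v) = -2
      rw [← mulVec_transpose, transpose_nonsing_inv, hHt, ← hwdef, dotProduct_comm,
        smul_dotProduct, hvw, smul_eq_mul]
      field_simp
    simp [det_unique, hX]
    ring
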